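/- Let d ≥ 3. Let F' be an extended hyperorthogonal well-folded curve obtained by one step of inflation from G'(d), and let R' be an extended hyperorthogonal well-folded curve obtained by one step of inflation from the reverse of G'(d). Then there is no non-reverse isometry, i.e., no hyperoctahedral symmetry τ of the cube (without reversal of the curve), such that τ(R') visits its vertices in the same order as F'. -/

import Mathlib

open MeasureTheory

/-! ## Basic objects: points of `ℤ^d` (indexed by coordinates `1,…,d`), directions,
Gray codes, curves on the grid, inflation, well-foldedness, hyperorthogonality. -/

/-- A point of the grid `ℤ^d`; only coordinates `1,…,d` are meaningful
(coordinate `0` and coordinates `> d` are kept equal to `0`). -/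
abbrev Pt : Type := ℕ → ℤ

def ptZero : Pt := fun _ => 0

/-- `flipped i = 1` if `i < 0`, and `0` otherwise. -/
def flipped (i : ℤ) : ℤ := if i < 0 then 1 else 0

/-- Reversal of a free curve (sequence of directions): reverse the order and
negate every direction. -/
def grayRev (l : List ℤ) : List ℤ := (l.map (fun x => -x)).reverse

/-- The Gray-code free curve `G(d)`: `G(0)` is empty and `G(d)` is the
concatenation of `G(d-1)`, the single direction `d`, and the reverse of `G(d-1)`. -/
def G : ℕ → List ℤ
  | 0 => []
  | d + 1 => G d ++ [((d : ℤ) + 1)] ++ grayRev (G d)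

/-- Moving a point one step in direction `e`: coordinate `|e|` changes by `sgn e`. -/
def move (v : Pt) (e : ℤ) : Pt := fun j => if j = e.natAbs then v j + e.sign else v j

/-- The vertices of the path starting at `start` whose successive edge
directions are given by `dirs`. -/
def pathVertices (start : Pt) (dirs : List ℤ) : List Pt := dirs.scanl move start

/-- `e` is a valid direction in `d` dimensions: `e ∈ {−d,…,−1,1,…,d}`. -/
def IsDir (d : ℕ) (e : ℤ) : Prop := e ≠ 0 ∧ e.natAbs ≤ d

/-- The (ordered) pair `(v,w)` is an edge with direction `e`. -/
def HasDir (d : ℕ) (v w : Pt) (e : ℤ) : Prop := IsDir d e ∧ w = move v e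

/-- `(v,w)` is an edge of the grid. -/
def IsEdge (d : ℕ) (v w : Pt) : Prop := ∃ e, HasDir d v w e

/-- A curve on the grid: a finite sequence of distinct points in which each pair of
consecutive points differs by `±1` in exactly one coordinate. -/
def IsGridCurve (d : ℕ) (c : List Pt) : Prop := c.Nodup ∧ c.Chain' (IsEdge d)

/-- Membership in the cube `{0,…,2^k−1}^d` (unused coordinates are `0`). -/
def InCube (d k : ℕ) (v : Pt) : Prop :=
  (∀ j, 1 ≤ j → j ≤ d → 0 ≤ v j ∧ v j < 2 ^ k) ∧ (∀ j, j = 0 ∨ d < j → v j = 0)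

/-- A `k`-curve: a Hamiltonian path on the grid `{0,…,2^k−1}^d`. -/
def IsKCurve (d k : ℕ) (c : List Pt) : Prop :=
  IsGridCurve d c ∧ ∀ v : Pt, v ∈ c ↔ InCube d k v

/-- A signed permutation of `{−d,…,−1,1,…,d}`: a bijection `σ` of this set
with `σ(−k) = −σ(k)` (bundled with its inverse). -/
structure SignedPerm (d : ℕ) where
  f : ℤ → ℤ
  inv : ℤ → ℤ
  maps : ∀ i : ℤ, IsDir d i → IsDir d (f i)
  maps_inv : ∀ i : ℤ, IsDir d i → IsDir d (inv i)
  neg : ∀ i : ℤ, f (-i) = -f i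
  neg_inv : ∀ i : ℤ, inv (-i) = -inv i
  left_inv : ∀ i : ℤ, IsDir d i → inv (f i) = i
  right_inv : ∀ i : ℤ, IsDir d i → f (inv i) = i

/-- The 1-curve `σ(G(d))` (an isometric image of the Gray-code curve) placed in the
cube `2·v + {0,1}^d`; its entry corner is forced to be
`2·v + (flipped(σ⁻¹(1)),…,flipped(σ⁻¹(d)))`. -/
def grayPiece (d : ℕ) (σ : SignedPerm d) (v : Pt) : List Pt :=
  pathVertices (fun j => 2 * v j + if 1 ≤ j ∧ j ≤ d then flipped (σ.inv (j : ℤ)) else 0)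
    ((G d).map σ.f)

/-- `B` is obtained from `A` by (well-folded) inflation: each vertex of `A` is
replaced by an isometric image of `G(d)` in the corresponding subcube, and the
result is a valid curve on the grid. (Reversed images of `G(d)` are themselves
images of `G(d)` under another signed permutation, so no generality is lost.) -/
def IsInflationWF (d : ℕ) (A B : List Pt) : Prop :=
  ∃ σ : ℕ → SignedPerm d,
    B = ((List.range A.length).map (fun i => grayPiece d (σ i) (A.getD i ptZero))).flatten ∧
    IsGridCurve d B

/-- A curve is well-folded if it is a single vertex or is obtained by inflation from a
well-folded curve, every inserted 1-curve being an isometric image of `G(d)`. -/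
inductive WellFolded (d : ℕ) : List Pt → Prop
  | single (v : Pt) : WellFolded d [v]
  | inflate {A B : List Pt} : WellFolded d A → IsInflationWF d A B → WellFolded d B

/-- The set of axes in which `v` and `w` differ (for a grid edge this is the
singleton of its axis). -/
def axesOfEdge (d : ℕ) (v w : Pt) : Finset ℕ :=
  (Finset.range (d + 1)).filter (fun j => v j ≠ w j)

/-- Hyperorthogonality: for every `n ∈ {0,…,d−2}`, every `2^n` consecutive
edges of the curve have exactly `n+1` distinct axes. -/
def Hyperorthogonal (d : ℕ) (c : List Pt) : Prop :=
  ∀ n, n ≤ d - 2 → ∀ s, s + 2 ^ n + 1 ≤ c.length →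
    ((Finset.range (2 ^ n)).biUnion
      (fun t => axesOfEdge d (c.getD (s + t) ptZero) (c.getD (s + t + 1) ptZero))).card = n + 1

/-- The depth of a direction `a` in a signed permutation `σ`:
`0` if `|a| ∈ {|σ(d)|,|σ(d−1)|}`, and otherwise the number `j` with `|σ(d−1−j)| = |a|`. -/
def depth (d : ℕ) (σ : SignedPerm d) (a : ℤ) : ℕ :=
  if (σ.inv a).natAbs = d ∨ (σ.inv a).natAbs = d - 1 then 0 else d - 1 - (σ.inv a).natAbs

/-- The (signed) direction of the edge from `v` to `w`
(for a grid edge with axis `j` this is `±j`). -/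
def dirOf (d : ℕ) (v w : Pt) : ℤ :=
  ∑ j ∈ (Finset.range (d + 1)).filter (fun j => v j ≠ w j), (j : ℤ) * (w j - v j)

/-- The axis of the edge from `v` to `w`. -/
def axisOf (d : ℕ) (v w : Pt) : ℕ := (dirOf d v w).natAbs

/-! ## Extended curves -/

/-- For the extended curve with entry-edge direction `en`, vertex list `c` and
exit-edge direction `ex`, the axis of its `t`-th edge, where the entry edge has
index `0`, the internal edges have indices `1,…,c.length − 1` (edge `t` joins
`c[t−1]` and `c[t]`) and the exit edge has index `c.length`. -/
def axE (d : ℕ) (en : ℤ) (c : List Pt) (ex : ℤ) (t : ℕ) : ℕ :=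
  if t = 0 then en.natAbs
  else if t = c.length then ex.natAbs
  else axisOf d (c.getD (t - 1) ptZero) (c.getD t ptZero)

/-- The edge distance of the axis `a` to the vertex with index `p` within the
extended curve `(en, c, ex)`: one less than the number of edges of the smallest
contiguous subcurve containing this vertex and an edge with axis `a`. -/
noncomputable def edgedistE (d : ℕ) (en : ℤ) (c : List Pt) (ex : ℤ) (p a : ℕ) : ℕ :=
  sInf {m | ∃ t, t ≤ c.length ∧ axE d en c ex t = a ∧
    m = if t ≤ p then p - t else t - p - 1}

/-- Hyperorthogonality of an extended curve: every `2^n` consecutive edges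
(including the entry and exit edges) have exactly `n+1` distinct axes, for all
`n ∈ {0,…,d−2}`. -/
def HyperorthogonalE (d : ℕ) (en : ℤ) (c : List Pt) (ex : ℤ) : Prop :=
  ∀ n, n ≤ d - 2 → ∀ s, s + 2 ^ n ≤ c.length + 1 →
    ((Finset.range (2 ^ n)).image (fun t => axE d en c ex (s + t))).card = n + 1

/-- The sequence of approximating curves determined by a system of signed
permutations `σ k i` (one for each vertex `i` of the `k`-th curve):
`A_0` is the single vertex at the origin and `A_{k+1}` is obtained from `A_k` by
inflation, vertex `i` being replaced by the 1-curve `σ_{k,i}(G(d))`. -/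
def buildCurve (d : ℕ) (σ : ℕ → ℕ → SignedPerm d) : ℕ → List Pt
  | 0 => [ptZero]
  | k + 1 =>
    ((List.range (buildCurve d σ k).length).map
      (fun i => grayPiece d (σ k i) ((buildCurve d σ k).getD i ptZero))).flatten

/-- `f : [0,1] → [0,1]^d` is the space-filling curve approximated by the curves
`A k`: the `i`-th vertex of `A k` corresponds to the cube `2^{−k}(v_{k,i} + [0,1]^d)`,
and `f` maps `[i/2^{dk},(i+1)/2^{dk}]` into that cube. -/
def Approximates (d : ℕ) (A : ℕ → List Pt) (f : ℝ → Fin d → ℝ) : Prop :=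
  ∀ k i, i < (A k).length → ∀ t : ℝ,
    (i : ℝ) / 2 ^ (d * k) ≤ t → t ≤ ((i : ℝ) + 1) / 2 ^ (d * k) →
    ∀ j : Fin d,
      ((((A k).getD i ptZero) ((j : ℕ) + 1) : ℝ) / 2 ^ k ≤ f t j ∧
        f t j ≤ ((((A k).getD i ptZero) ((j : ℕ) + 1) : ℝ) + 1) / 2 ^ k)

/-- The smallest axis-aligned box containing a (nonempty, bounded) set `S ⊆ ℝ^d`. -/
noncomputable def bbox (d : ℕ) (S : Set (Fin d → ℝ)) : Set (Fin d → ℝ) :=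
  Set.univ.pi fun j => Set.Icc (sInf ((fun p => p j) '' S)) (sSup ((fun p => p j) '' S))

/-! ## General inflation (arbitrary 1-curves), isometric copies, self-similarity -/

/-- `c` is a 1-curve on the translated unit cube `2·base + {0,1}^d`. -/
def IsUnitCurveAt (d : ℕ) (base : Pt) (c : List Pt) : Prop :=
  IsGridCurve d c ∧
    ∀ v : Pt, v ∈ c ↔
      ((∀ j, 1 ≤ j → j ≤ d → v j = 2 * base j ∨ v j = 2 * base j + 1) ∧
        ∀ j, j = 0 ∨ d < j → v j = 2 * base j)

/-- `B` is obtained from `A` by (general) inflation: each vertex `v_i` of `A` is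
replaced by a 1-curve on `2·v_i + {0,1}^d`, and each edge of `A` with direction `e_i`
is replaced by an edge of the same direction connecting consecutive 1-curves. -/
def IsInflation (d : ℕ) (A B : List Pt) : Prop :=
  ∃ C : ℕ → List Pt,
    B = ((List.range A.length).map C).flatten ∧
    IsGridCurve d B ∧
    (∀ i, i < A.length → IsUnitCurveAt d (A.getD i ptZero) (C i)) ∧
    (∀ i, i + 1 < A.length → ∀ e : ℤ,
      HasDir d (A.getD i ptZero) (A.getD (i + 1) ptZero) e →
      HasDir d ((C i).getLastD ptZero) ((C (i + 1)).headD ptZero) e)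

/-- `InflationChain d k X`: `X` is constructed from a single vertex by `k` steps
of inflation. -/
inductive InflationChain (d : ℕ) : ℕ → List Pt → Prop
  | base (v : Pt) : InflationChain d 0 [v]
  | step {k : ℕ} {A B : List Pt} :
      InflationChain d k A → IsInflation d A B → InflationChain d (k + 1) B

/-- The hyperoctahedral symmetry of the cube `{0,…,M}^d` given by the signed
permutation `σ`: the coordinate `|σ⁻¹(j)|` of the argument is sent to coordinate `j`,
reflected (`x ↦ M − x`) whenever `σ⁻¹(j) < 0`. -/
def applySP (d : ℕ) (M : ℤ) (σ : SignedPerm d) (x : Pt) : Pt :=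
  fun j =>
    if 1 ≤ j ∧ j ≤ d then
      if 0 ≤ σ.inv (j : ℤ) then x (σ.inv (j : ℤ)).natAbs
      else M - x (σ.inv (j : ℤ)).natAbs
    else x j

/-- `B` is an isometric copy of the curve `A` (living in a cube `{0,…,M}^d`):
a hyperoctahedral symmetry, possibly composed with reversal, followed by a translation. -/
def IsometricCopy (d : ℕ) (M : ℤ) (A B : List Pt) : Prop :=
  ∃ σ : SignedPerm d, ∃ rev : Bool, ∃ tr : Pt,
    B = (if rev then A.reverse else A).map (fun v => fun j => applySP d M σ v j + tr j)

/-- Self-similarity of one approximation step: `B` is the concatenation of `2^d`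
isometric copies of the `k`-curve `A`, connected by single edges. -/
def SelfSimilarStep (d k : ℕ) (A B : List Pt) : Prop :=
  ∃ parts : ℕ → List Pt,
    B = ((List.range (2 ^ d)).map parts).flatten ∧
    IsGridCurve d B ∧
    ∀ m, m < 2 ^ d → IsometricCopy d ((2 : ℤ) ^ k - 1) A (parts m)

/-- Coordinate `a ∈ {1,…,d}` of a point of `ℝ^d`. -/
noncomputable def coordR (d : ℕ) (x : Fin d → ℝ) (a : ℕ) : ℝ :=
  if h : a - 1 < d then x ⟨a - 1, h⟩ else 0

/-- The hyperoctahedral symmetry of the unit cube `[0,1]^d` given by the signed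
permutation `σ`. -/
noncomputable def applySPR (d : ℕ) (σ : SignedPerm d) (x : Fin d → ℝ) : Fin d → ℝ :=
  fun j =>
    if 0 ≤ σ.inv ((j : ℕ) + 1 : ℤ) then coordR d x (σ.inv ((j : ℕ) + 1 : ℤ)).natAbs
    else 1 - coordR d x (σ.inv ((j : ℕ) + 1 : ℤ)).natAbs

/-- `f` is a self-similar hyperorthogonal well-folded space-filling curve:
it is approximated by a sequence of `k`-curves, starting from a single vertex,
in which each curve is obtained from the previous one by well-folded inflation,
all approximating curves are hyperorthogonal, and each approximating curve is the
concatenation of `2^d` isometric copies of the previous one. -/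
def SSHOWFcurve (d : ℕ) (f : ℝ → Fin d → ℝ) : Prop :=
  ∃ A : ℕ → List Pt,
    A 0 = [ptZero] ∧
    (∀ k, IsInflationWF d (A k) (A (k + 1))) ∧
    (∀ k, IsKCurve d k (A k)) ∧
    (∀ k, Hyperorthogonal d (A k)) ∧
    (∀ k, SelfSimilarStep d k (A k) (A (k + 1))) ∧
    Approximates d A f

/-- Two space-filling curves are the same up to hyperoctahedral symmetry and
reversal. -/
def curveEquiv (d : ℕ) (f g : ℝ → Fin d → ℝ) : Prop :=
  ∃ τ : SignedPerm d,
    (∀ t ∈ Set.Icc (0 : ℝ) 1, g t = applySPR d τ (f t)) ∨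
    (∀ t ∈ Set.Icc (0 : ℝ) 1, g t = applySPR d τ (f (1 - t)))

/-- The direction of the entry edge of the extended child curve `C'_m` within the
inflation of the extended curve `(e0, A, e1)`. -/
def childEntryDir (d : ℕ) (A : List Pt) (e0 : ℤ) (m : ℕ) : ℤ :=
  if m = 0 then e0 else dirOf d (A.getD (m - 1) ptZero) (A.getD m ptZero)

/-- The direction of the exit edge of the extended child curve `C'_m` within the
inflation of the extended curve `(e0, A, e1)`. -/
def childExitDir (d : ℕ) (A : List Pt) (e1 : ℤ) (m : ℕ) : ℤ :=
  if m + 1 = A.length then e1 else dirOf d (A.getD m ptZero) (A.getD (m + 1) ptZero)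

/-- The local edge distance of the axis `a` to the vertex with index `i` within the
extended approximating curve `A'_k` (entry direction `e0`, exit direction `e1`)
of the system `σ`: the edge distance within the extended child curve of `A'_{k-1}`
containing this vertex. -/
noncomputable def led (d : ℕ) (σ : ℕ → ℕ → SignedPerm d) (e0 e1 : ℤ) :
    ℕ → ℕ → ℕ → ℕ
  | 0, _, a => edgedistE d e0 (buildCurve d σ 0) e1 0 a
  | k + 1, i, a =>
    edgedistE d (childEntryDir d (buildCurve d σ k) e0 (i / 2 ^ d))
      (grayPiece d (σ k (i / 2 ^ d)) ((buildCurve d σ k).getD (i / 2 ^ d) ptZero))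
      (childExitDir d (buildCurve d σ k) e1 (i / 2 ^ d))
      (i % 2 ^ d) a

/-- The system of permutations `σ` describes a sequence of extended hyperorthogonal
well-folded approximating curves with entry direction `e0` and exit direction `e1`,
in which the signs of `σ_{k,1}⁻¹` are prescribed by `s`, and the elements of every
unsigned permutation `|σ_{k,i}|` are sorted by decreasing local edge distance. -/
def GoodSystem (d : ℕ) (e0 e1 : ℤ) (s : ℕ → ℕ → ℤ) (σ : ℕ → ℕ → SignedPerm d) : Prop :=
  (∀ k, IsKCurve d k (buildCurve d σ k)) ∧
  (∀ k, HyperorthogonalE d e0 (buildCurve d σ k) e1) ∧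
  (∀ k, ¬ InCube d k (move ((buildCurve d σ k).headD ptZero) (-e0))) ∧
  (∀ k, ¬ InCube d k (move ((buildCurve d σ k).getLastD ptZero) e1)) ∧
  (∀ k j, 1 ≤ j → j ≤ d → Int.sign ((σ k 0).inv (j : ℤ)) = s k j) ∧
  (∀ k i, i < (buildCurve d σ k).length →
    ∀ p q : ℕ, 1 ≤ p → p ≤ q → q ≤ d →
      led d σ e0 e1 k i (((σ k i).f (q : ℤ)).natAbs) ≤
        led d σ e0 e1 k i (((σ k i).f (p : ℤ)).natAbs))

/-- The Butz-Moore generalization of the Hilbert curve, described by the conditions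
on its system of signed permutations: `|σ_{k,i}(d)| = 1` for the first and last
subcube, `|σ_{k,i}(d)| = max(|e_{k,i−1}|,|e_{k,i}|)` in between, all unsigned
permutations are cyclic rotations, and the entry is at the origin. -/
def ButzMoore (d : ℕ) (σ : ℕ → ℕ → SignedPerm d) : Prop :=
  (∀ k, IsKCurve d k (buildCurve d σ k)) ∧
  (∀ k i, i < 2 ^ (d * k) → (i = 0 ∨ i = 2 ^ (d * k) - 1) →
    ((σ k i).f (d : ℤ)).natAbs = 1) ∧
  (∀ k i, 0 < i → i + 1 < 2 ^ (d * k) →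
    ((σ k i).f (d : ℤ)).natAbs =
      max (dirOf d ((buildCurve d σ k).getD (i - 1) ptZero)
            ((buildCurve d σ k).getD i ptZero)).natAbs
          (dirOf d ((buildCurve d σ k).getD i ptZero)
            ((buildCurve d σ k).getD (i + 1) ptZero)).natAbs) ∧
  (∀ k i j, 1 ≤ j → j ≤ d →
    ((σ k i).f (j : ℤ)).natAbs = ((((σ k i).f (d : ℤ)).natAbs + j - 1) % d) + 1) ∧
  (∀ k j, 1 ≤ j → j ≤ d → 0 ≤ (σ k 0).inv (j : ℤ))

/-! ## Generalized curves (diagonal edges allowed) -/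

/-- A generalized edge: `w ≠ v` and every coordinate changes by at most 1. -/
def IsGenEdge (d : ℕ) (v w : Pt) : Prop :=
  v ≠ w ∧ (∀ j, 1 ≤ j → j ≤ d → |w j - v j| ≤ 1) ∧ ∀ j, j = 0 ∨ d < j → w j = v j

/-- A generalized curve on the grid (diagonal edges allowed). -/
def IsGenCurve (d : ℕ) (c : List Pt) : Prop := c.Nodup ∧ c.Chain' (IsGenEdge d)

/-- Generalized inflation: vertices are replaced by 1-curves on the corresponding
subcubes, consecutive 1-curves being joined by a single (possibly diagonal) edge. -/
def IsGenInflation (d : ℕ) (A B : List Pt) : Prop :=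
  ∃ C : ℕ → List Pt,
    B = ((List.range A.length).map C).flatten ∧
    IsGenCurve d B ∧
    (∀ i, i < A.length → IsUnitCurveAt d (A.getD i ptZero) (C i))

/-! ### Auxiliary lemmas for Statement 11 -/

section Aux

lemma grayRev_length (l : List ℤ) : (grayRev l).length = l.length := by simp [grayRev]

lemma G_length (d : ℕ) : (G d).length = 2 ^ d - 1 := by
  induction d with
  | zero => simp [G]
  | succ d ih =>
    have h1 : 1 ≤ 2 ^ d := Nat.one_le_two_pow
    simp [G, grayRev_length, ih, pow_succ]
    omega

lemma G_mem {d : ℕ} : ∀ e ∈ G d, e ≠ 0 ∧ e.natAbs ≤ d := by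
  induction d with
  | zero => simp [G]
  | succ d ih =>
    intro e h
    simp only [G, List.mem_append, grayRev, List.mem_reverse, List.mem_map,
      List.mem_singleton] at h
    rcases h with (h | h) | ⟨x, hx, rfl⟩
    · exact ⟨(ih e h).1, (ih e h).2.trans (Nat.le_succ d)⟩
    · subst h
      have hcast : ((d : ℤ) + 1) = ((d + 1 : ℕ) : ℤ) := by push_cast; ring
      constructor
      · positivity
      · rw [hcast, Int.natAbs_natCast]
    · refine ⟨neg_ne_zero.mpr (ih x hx).1, ?_⟩
      rw [Int.natAbs_neg]; exact (ih x hx).2.trans (Nat.le_succ d)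

lemma G_prefix {a d : ℕ} (h : a ≤ d) : ∃ t, G d = G a ++ t := by
  induction d with
  | zero =>
    have : a = 0 := Nat.le_zero.mp h
    exact ⟨[], by simp [this]⟩
  | succ d ih =>
    rcases Nat.lt_or_ge a (d + 1) with h' | h'
    · obtain ⟨t, ht⟩ := ih (Nat.lt_succ_iff.mp h')
      exact ⟨t ++ [((d : ℤ) + 1)] ++ grayRev (G d), by simp [G, ht]⟩
    · have : a = d + 1 := le_antisymm h h'
      exact ⟨[], by simp [this]⟩

lemma G_getD_pow {a d : ℕ} (ha : 1 ≤ a) (had : a ≤ d) :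
    (G d).getD (2 ^ (a - 1) - 1) 0 = (a : ℤ) := by
  obtain ⟨t, ht⟩ := G_prefix had
  obtain ⟨a', rfl⟩ : ∃ a', a = a' + 1 := ⟨a - 1, by omega⟩
  have hlen : (G a').length = 2 ^ a' - 1 := G_length a'
  have hidx : 2 ^ (a' + 1 - 1) - 1 = (G a').length := by rw [hlen]; simp
  rw [ht, show G (a' + 1) = G a' ++ (([((a' : ℤ) + 1)] ++ grayRev (G a'))) by
    simp [G], List.append_assoc, hidx, List.getD_append_right _ _ _ _ le_rfl]
  simp

lemma G_getD_zero {d : ℕ} (hd : 1 ≤ d) : (G d).getD 0 0 = 1 := by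
  have := G_getD_pow le_rfl hd
  simpa using this

lemma grayRev_getD {l : List ℤ} {i : ℕ} (h : i < l.length) :
    (grayRev l).getD i 0 = -(l.getD (l.length - 1 - i) 0) := by
  have h1 : i < (grayRev l).length := by rwa [grayRev_length]
  have h2 : l.length - 1 - i < l.length := by omega
  rw [List.getD_eq_getElem _ _ h1, List.getD_eq_getElem _ _ h2]
  simp only [grayRev]
  rw [List.getElem_reverse]
  simp


lemma G_last {d : ℕ} (hd : 2 ≤ d) : (G d).getD (2 ^ d - 2) 0 = -1 := by
  obtain ⟨d', rfl⟩ : ∃ d', d = d' + 1 := ⟨d - 1, by omega⟩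
  have hd' : 1 ≤ d' := by omega
  have h1 : 1 ≤ 2 ^ d' := Nat.one_le_two_pow
  have h2 : 2 ≤ 2 ^ d' := by
    calc 2 = 2 ^ 1 := rfl
    _ ≤ 2 ^ d' := Nat.pow_le_pow_right (by norm_num) hd'
  have hlen : (G d' ++ [((d' : ℤ) + 1)]).length = 2 ^ d' := by
    simp [G_length]; omega
  have hidx : 2 ^ (d' + 1) - 2 = (G d' ++ [((d' : ℤ) + 1)]).length + (2 ^ d' - 2) := by
    rw [hlen, pow_succ]; omega
  rw [show G (d' + 1) = (G d' ++ [((d' : ℤ) + 1)]) ++ grayRev (G d') by simp [G],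
    hidx, List.getD_append_right _ _ _ _ (by omega), Nat.add_sub_cancel_left]
  have hG : 2 ^ d' - 2 < (G d').length := by rw [G_length]; omega
  rw [grayRev_getD hG, G_length]
  have : 2 ^ d' - 1 - 1 - (2 ^ d' - 2) = 0 := by omega
  rw [this, G_getD_zero hd']

lemma G_mirror {d : ℕ} {p : ℕ} (hd : 1 ≤ d) (hp : p < 2 ^ (d - 1) - 1) :
    (G d).getD (2 ^ d - 2 - p) 0 = -((G d).getD p 0) := by
  obtain ⟨d', rfl⟩ : ∃ d', d = d' + 1 := ⟨d - 1, by omega⟩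
  simp only [Nat.add_sub_cancel] at hp
  have h1 : 1 ≤ 2 ^ d' := Nat.one_le_two_pow
  have hlen : (G d' ++ [((d' : ℤ) + 1)]).length = 2 ^ d' := by
    simp [G_length]; omega
  have hGlen : (G d').length = 2 ^ d' - 1 := G_length d'
  have hidx : 2 ^ (d' + 1) - 2 - p = (G d' ++ [((d' : ℤ) + 1)]).length + (2 ^ d' - 2 - p) := by
    rw [hlen, pow_succ]; omega
  rw [show G (d' + 1) = (G d' ++ [((d' : ℤ) + 1)]) ++ grayRev (G d') by simp [G],
    hidx, List.getD_append_right _ _ _ _ (by omega), Nat.add_sub_cancel_left,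
    List.getD_append _ _ _ _ (by omega), List.getD_append _ _ _ _ (by omega)]
  rw [grayRev_getD (by omega), hGlen]
  have : 2 ^ d' - 1 - 1 - (2 ^ d' - 2 - p) = p := by omega
  rw [this]

/-- Sum of the signs of the entries of `l` having axis `j`. -/
def sumAt (j : ℕ) (l : List ℤ) : ℤ :=
  (l.map (fun e => if e.natAbs = j then e.sign else 0)).sum

@[simp] lemma sumAt_nil (j : ℕ) : sumAt j [] = 0 := rfl

lemma sumAt_append (j : ℕ) (l1 l2 : List ℤ) :
    sumAt j (l1 ++ l2) = sumAt j l1 + sumAt j l2 := by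
  simp [sumAt]

lemma sumAt_cons (j : ℕ) (e : ℤ) (l : List ℤ) :
    sumAt j (e :: l) = (if e.natAbs = j then e.sign else 0) + sumAt j l := by
  simp [sumAt]

lemma sumAt_singleton (j : ℕ) (e : ℤ) :
    sumAt j [e] = if e.natAbs = j then e.sign else 0 := by
  simp [sumAt]

lemma grayRev_cons (e : ℤ) (l : List ℤ) : grayRev (e :: l) = grayRev l ++ [-e] := by
  simp [grayRev]

lemma sumAt_grayRev (j : ℕ) (l : List ℤ) : sumAt j (grayRev l) = -sumAt j l := by
  induction l with
  | nil => simp [grayRev]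
  | cons e l ih =>
    rw [grayRev_cons, sumAt_append, ih, sumAt_cons, sumAt_cons, sumAt_nil]
    simp only [Int.natAbs_neg, Int.sign_neg]
    split <;> ring

lemma sumAt_eq_zero {j : ℕ} {l : List ℤ} (h : ∀ e ∈ l, e.natAbs ≠ j) :
    sumAt j l = 0 := by
  induction l with
  | nil => rfl
  | cons e l ih =>
    rw [sumAt_cons, if_neg (h e (by simp)), ih (fun x hx => h x (by simp [hx]))]
    ring

lemma G_sumAt {d : ℕ} {a : ℕ} (ha : 1 ≤ a) :
    sumAt a (G d) = if a = d then 1 else 0 := by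
  induction d with
  | zero => simp [G]; omega
  | succ d ih =>
    rw [show G (d + 1) = G d ++ [((d : ℤ) + 1)] ++ grayRev (G d) from rfl,
      sumAt_append, sumAt_append, sumAt_grayRev, ih, sumAt_singleton]
    have hcast : ((d : ℤ) + 1).natAbs = d + 1 := by
      rw [show ((d : ℤ) + 1) = ((d + 1 : ℕ) : ℤ) by push_cast; ring, Int.natAbs_natCast]
    have hsign : ((d : ℤ) + 1).sign = 1 := Int.sign_eq_one_of_pos (by positivity)
    rw [hcast, hsign]
    by_cases h : a = d + 1
    · subst h; simp
    · rw [if_neg h]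
      split <;> split <;> omega

lemma G_sumAt_high {d a : ℕ} (h : d < a) : sumAt a (G d) = 0 :=
  sumAt_eq_zero (fun e he => by have := (G_mem e he).2; omega)

lemma foldl_move_apply (l : List ℤ) (st : Pt) (j : ℕ) :
    (List.foldl move st l) j = st j + sumAt j l := by
  induction l generalizing st with
  | nil => simp
  | cons e l ih =>
    rw [List.foldl_cons, ih, sumAt_cons]
    simp only [move]
    by_cases h : j = e.natAbs
    · rw [if_pos h, if_pos h.symm]; ring
    · rw [if_neg h, if_neg (fun hh => h hh.symm)]; ring

lemma scanl_getD_eq_foldl (l : List ℤ) (st : Pt) (t : ℕ) (h : t ≤ l.length) :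
    (List.scanl move st l).getD t ptZero = List.foldl move st (l.take t) := by
  induction l generalizing st t with
  | nil => simp at h; simp [h]
  | cons e l ih =>
    cases t with
    | zero => simp
    | succ t =>
      rw [List.scanl_cons]
      simp only [List.getD_cons_succ, List.take_succ_cons, List.foldl_cons]
      exact ih (move st e) t (by simpa using h)

lemma take_succ_getD (l : List ℤ) (t : ℕ) (h : t < l.length) :
    l.take (t + 1) = l.take t ++ [l.getD t 0] := by
  rw [List.getD_eq_getElem _ _ h, List.take_succ, List.getElem?_eq_getElem h]
  rfl


variable {d : ℕ}

lemma isDir_coe {j : ℕ} (h1 : 1 ≤ j) (h2 : j ≤ d) : IsDir d (j : ℤ) :=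
  ⟨Int.natCast_ne_zero.mpr (by omega), by rwa [Int.natAbs_natCast]⟩

lemma sp_natAbs_f_natAbs (σ : SignedPerm d) {e : ℤ} (he : IsDir d e) :
    (σ.f ((e.natAbs : ℕ) : ℤ)).natAbs = (σ.f e).natAbs := by
  rcases Int.natAbs_eq e with h | h
  · rw [← h]
  · have : σ.f e = -σ.f ((e.natAbs : ℕ) : ℤ) := by conv_lhs => rw [h, σ.neg]
    rw [this, Int.natAbs_neg]

lemma sp_axis_iff (σ : SignedPerm d) {e : ℤ} (he : IsDir d e) {j : ℕ}
    (hj1 : 1 ≤ j) (hjd : j ≤ d) :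
    (σ.f e).natAbs = j ↔ e.natAbs = (σ.inv (j : ℤ)).natAbs := by
  have hdj : IsDir d (j : ℤ) := isDir_coe hj1 hjd
  constructor
  · intro h
    have h2 : σ.f e = (j : ℤ) ∨ σ.f e = -(j : ℤ) := by
      rcases Int.natAbs_eq (σ.f e) with h' | h'
      · left; rw [h', h]
      · right; rw [h', h]
    rcases h2 with h' | h'
    · have : e = σ.inv (j : ℤ) := by rw [← σ.left_inv e he, h']
      rw [this]
    · have : e = σ.inv (-(j : ℤ)) := by rw [← σ.left_inv e he, h']
      rw [σ.neg_inv] at this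
      rw [this, Int.natAbs_neg]
  · intro h
    have h2 : e = σ.inv (j : ℤ) ∨ e = -σ.inv (j : ℤ) :=
      Int.natAbs_eq_natAbs_iff.mp h
    rcases h2 with h' | h'
    · rw [h', σ.right_inv _ hdj, Int.natAbs_natCast]
    · rw [h', σ.neg, σ.right_inv _ hdj, Int.natAbs_neg, Int.natAbs_natCast]

lemma sp_f_eq_sign_mul (σ : SignedPerm d) {e : ℤ} (he : IsDir d e) :
    σ.f e = e.sign * σ.f ((e.natAbs : ℕ) : ℤ) := by
  rcases Int.natAbs_eq e with h | h
  · have hpos : 0 < e := by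
      rcases lt_trichotomy e 0 with h' | h' | h'
      · exfalso; rw [h] at h'; omega
      · exact absurd h' he.1
      · exact h'
    rw [Int.sign_eq_one_of_pos hpos, one_mul, ← h]
  · have hneg : e < 0 := by
      rcases lt_trichotomy e 0 with h' | h' | h'
      · exact h'
      · exact absurd h' he.1
      · exfalso; rw [h] at h'; omega
    rw [Int.sign_eq_neg_one_of_neg hneg]
    have : σ.f e = -σ.f ((e.natAbs : ℕ) : ℤ) := by conv_lhs => rw [h, σ.neg]
    rw [this]; ring

lemma move_diff_iff {v : Pt} {e : ℤ} (he : e ≠ 0) (j : ℕ) :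
    move v e j ≠ v j ↔ j = e.natAbs := by
  have hs : e.sign ≠ 0 := fun hh => he (Int.sign_eq_zero_iff_zero.mp hh)
  constructor
  · intro h
    by_contra hj
    exact h (by simp [move, hj])
  · intro h
    simp only [move, if_pos h]
    omega

lemma axisOf_move {v : Pt} {e : ℤ} (he : IsDir d e) :
    axisOf d v (move v e) = e.natAbs := by
  have hs : e.sign ≠ 0 := fun hh => he.1 (Int.sign_eq_zero_iff_zero.mp hh)
  have hfilter : (Finset.range (d + 1)).filter (fun j => v j ≠ move v e j) = {e.natAbs} := by
    ext j
    simp only [Finset.mem_filter, Finset.mem_range, Finset.mem_singleton]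
    constructor
    · rintro ⟨_, hne⟩
      exact (move_diff_iff he.1 j).mp (fun h => hne h.symm)
    · rintro rfl
      refine ⟨by have := he.2; omega, fun h => ?_⟩
      exact (move_diff_iff he.1 e.natAbs).mpr rfl h.symm
  rw [axisOf, dirOf, hfilter, Finset.sum_singleton]
  have : move v e e.natAbs - v e.natAbs = e.sign := by simp [move]
  rw [this, Int.natAbs_mul, Int.natAbs_natCast, Int.natAbs_sign]
  simp [he.1]

lemma flat_length {α : Type*} (f : ℕ → List α) (n c : ℕ)
    (hc : ∀ i, i < n → (f i).length = c) :
    (((List.range n).map f).flatten).length = n * c := by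
  induction n with
  | zero => simp
  | succ n ih =>
    rw [List.range_succ, List.map_append, List.flatten_append]
    simp only [List.length_append, ih (fun i hi => hc i (by omega))]
    simp [hc n (by omega), Nat.succ_mul]

lemma flat_getD {α : Type*} (f : ℕ → List α) (d0 : α) {n c q r : ℕ}
    (hc : ∀ i, i < n → (f i).length = c) (hq : q < n) (hr : r < c) :
    (((List.range n).map f).flatten).getD (q * c + r) d0 = (f q).getD r d0 := by
  induction n with
  | zero => omega
  | succ n ih =>
    rw [List.range_succ, List.map_append, List.flatten_append]
    rcases Nat.lt_or_ge q n with h | h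
    · rw [List.getD_append]
      · exact ih (fun i hi => hc i (by omega)) h
      · rw [flat_length f n c (fun i hi => hc i (by omega))]
        calc q * c + r < q * c + c := by omega
        _ = (q + 1) * c := by ring
        _ ≤ n * c := Nat.mul_le_mul_right c h
    · have hq' : q = n := by omega
      subst hq'
      rw [List.getD_append_right, flat_length f q c (fun i hi => hc i (by omega))]
      · simp
      · rw [flat_length f q c (fun i hi => hc i (by omega))]; omega

lemma grayPiece_length (σ : SignedPerm d) (v : Pt) :
    (grayPiece d σ v).length = 2 ^ d := by
  have h1 : 1 ≤ 2 ^ d := Nat.one_le_two_pow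
  simp [grayPiece, pathVertices, List.length_scanl, G_length]
  omega

lemma grayPiece_getD_zero (σ : SignedPerm d) (v : Pt) :
    (grayPiece d σ v).getD 0 ptZero =
      fun j => 2 * v j + if 1 ≤ j ∧ j ≤ d then flipped (σ.inv (j : ℤ)) else 0 := by
  rw [grayPiece, pathVertices, scanl_getD_eq_foldl _ _ 0 (Nat.zero_le _)]
  simp

lemma grayPiece_getD_succ (σ : SignedPerm d) (v : Pt) {t : ℕ} (h1 : 1 ≤ t)
    (h2 : t ≤ 2 ^ d - 1) :
    (grayPiece d σ v).getD t ptZero =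
      move ((grayPiece d σ v).getD (t - 1) ptZero) (σ.f ((G d).getD (t - 1) 0)) := by
  obtain ⟨t', rfl⟩ : ∃ t', t = t' + 1 := ⟨t - 1, by omega⟩
  have hGlen : (G d).length = 2 ^ d - 1 := G_length d
  have hmlen : ((G d).map σ.f).length = 2 ^ d - 1 := by simp [hGlen]
  have ht' : t' < ((G d).map σ.f).length := by omega
  rw [grayPiece, pathVertices]
  simp only [Nat.add_sub_cancel]
  rw [scanl_getD_eq_foldl _ _ (t' + 1) (by omega),
    scanl_getD_eq_foldl _ _ t' (by omega),
    take_succ_getD _ t' ht', List.foldl_append]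
  simp only [List.foldl_cons, List.foldl_nil]
  congr 1
  rw [List.getD_eq_getElem _ _ ht', List.getElem_map,
    List.getD_eq_getElem _ _ (by omega : t' < (G d).length)]

lemma sumAt_map_sp (σ : SignedPerm d) {l : List ℤ} (hl : ∀ e ∈ l, IsDir d e)
    {j : ℕ} (hj1 : 1 ≤ j) (hjd : j ≤ d) :
    sumAt j (l.map σ.f) =
      (σ.f (((σ.inv (j : ℤ)).natAbs : ℕ) : ℤ)).sign * sumAt ((σ.inv (j : ℤ)).natAbs) l := by
  set a : ℕ := (σ.inv (j : ℤ)).natAbs with ha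
  induction l with
  | nil => simp
  | cons e l ih =>
    rw [List.map_cons, sumAt_cons, sumAt_cons, mul_add,
      ih (fun x hx => hl x (by simp [hx]))]
    congr 1
    have he : IsDir d e := hl e (by simp)
    have hiff := sp_axis_iff σ he hj1 hjd
    by_cases h : e.natAbs = a
    · rw [if_pos (hiff.mpr h), if_pos h]
      have h1 : σ.f e = e.sign * σ.f ((a : ℕ) : ℤ) := by
        rw [sp_f_eq_sign_mul σ he, h]
      rw [h1, Int.sign_mul, Int.sign_sign]
      ring
    · rw [if_neg (fun hh => h (hiff.mp hh)), if_neg h, mul_zero]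

lemma grayPiece_last_in_cube (σ : SignedPerm d) (v : Pt) {j : ℕ}
    (hj1 : 1 ≤ j) (hjd : j ≤ d) :
    (grayPiece d σ v).getD (2 ^ d - 1) ptZero j = 2 * v j ∨
      (grayPiece d σ v).getD (2 ^ d - 1) ptZero j = 2 * v j + 1 := by
  have hGlen : (G d).length = 2 ^ d - 1 := G_length d
  have hmlen : ((G d).map σ.f).length = 2 ^ d - 1 := by simp [hGlen]
  rw [grayPiece, pathVertices, scanl_getD_eq_foldl _ _ (2 ^ d - 1) (by omega),
    List.take_of_length_le (by omega), foldl_move_apply]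
  have hdj : IsDir d (j : ℤ) := isDir_coe hj1 hjd
  have hinv : IsDir d (σ.inv (j : ℤ)) := σ.maps_inv _ hdj
  set a : ℕ := (σ.inv (j : ℤ)).natAbs with ha
  have ha1 : 1 ≤ a := by have := Int.natAbs_pos.mpr hinv.1; omega
  rw [sumAt_map_sp σ (fun e he => ⟨(G_mem e he).1, (G_mem e he).2⟩) hj1 hjd, ← ha,
    G_sumAt ha1]
  simp only [if_pos (And.intro hj1 hjd)]
  rcases Int.natAbs_eq (σ.inv (j : ℤ)) with hh | hh
  · have hflip : flipped (σ.inv (j : ℤ)) = 0 := by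
      rw [flipped, if_neg]
      rw [hh]
      exact not_lt.mpr (by positivity)
    have hsf : σ.f ((a : ℕ) : ℤ) = (j : ℤ) := by
      have hc : ((a : ℕ) : ℤ) = σ.inv (j : ℤ) := by rw [ha]; exact hh.symm
      rw [hc, σ.right_inv _ hdj]
    have hsign : (σ.f ((a : ℕ) : ℤ)).sign = 1 := by
      rw [hsf]; exact Int.sign_eq_one_of_pos (by exact_mod_cast hj1)
    rw [hflip, hsign]
    by_cases h : a = d
    · rw [if_pos h]; right; ring
    · rw [if_neg h]; left; ring
  · have hneg : σ.inv (j : ℤ) < 0 := by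
      rw [hh]
      have : (0 : ℤ) < (a : ℤ) := by exact_mod_cast ha1
      omega
    have hflip : flipped (σ.inv (j : ℤ)) = 1 := by rw [flipped, if_pos hneg]
    have hsf : σ.f ((a : ℕ) : ℤ) = -(j : ℤ) := by
      have h1 : σ.f (σ.inv (j : ℤ)) = (j : ℤ) := σ.right_inv _ hdj
      have h2 : ((a : ℕ) : ℤ) = -(σ.inv (j : ℤ)) := by rw [ha]; omega
      rw [h2, σ.neg, h1]
    have hsign : (σ.f ((a : ℕ) : ℤ)).sign = -1 := by
      rw [hsf]
      have : (0 : ℤ) < (j : ℤ) := by exact_mod_cast hj1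
      exact Int.sign_eq_neg_one_of_neg (by omega)
    rw [hflip, hsign]
    by_cases h : a = d
    · rw [if_pos h]; left; ring
    · rw [if_neg h]; right; ring


lemma take_append_len {α : Type*} (l1 l2 : List α) (n : ℕ) :
    (l1 ++ l2).take (l1.length + n) = l1 ++ l2.take n := by
  induction l1 with
  | nil => simp
  | cons a l ih => simp [List.cons_append, Nat.succ_add, ih]

lemma take_append_le {α : Type*} (l1 l2 : List α) {n : ℕ} (h : n ≤ l1.length) :
    (l1 ++ l2).take n = l1.take n := by
  induction l1 generalizing n with
  | nil => simp at h; simp [h]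
  | cons a l ih =>
    cases n with
    | zero => simp
    | succ n => simp only [List.cons_append, List.take_succ_cons]
                rw [ih (by simpa using h)]

lemma pathG_length : (pathVertices ptZero (G d)).length = 2 ^ d := by
  have h1 : 1 ≤ 2 ^ d := Nat.one_le_two_pow
  simp [pathVertices, List.length_scanl, G_length]
  omega

lemma pathG_getD {m : ℕ} (hm : m ≤ 2 ^ d - 1) :
    (pathVertices ptZero (G d)).getD m ptZero = List.foldl move ptZero ((G d).take m) := by
  rw [pathVertices, scanl_getD_eq_foldl _ _ m (by rw [G_length]; omega)]

lemma pathG_coord {m : ℕ} (hm : m ≤ 2 ^ d - 1) (j : ℕ) :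
    (pathVertices ptZero (G d)).getD m ptZero j = sumAt j ((G d).take m) := by
  rw [pathG_getD hm, foldl_move_apply]
  simp [ptZero]

lemma grayRev_mem {l : List ℤ} {e : ℤ} (h : e ∈ grayRev l) : -e ∈ l := by
  simp only [grayRev, List.mem_reverse, List.mem_map] at h
  obtain ⟨x, hx, rfl⟩ := h
  simpa using hx

lemma pathG_zero : (pathVertices ptZero (G d)).getD 0 ptZero = ptZero := by
  funext j
  rw [pathG_coord (by omega)]
  simp [ptZero]

lemma pathG_pow {b : ℕ} (hb1 : 1 ≤ b) (hbd : b ≤ d) :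
    (pathVertices ptZero (G d)).getD (2 ^ (b - 1)) ptZero b = 1 := by
  have h2b : 2 ^ (b - 1) ≤ 2 ^ d - 1 := by
    have h1 : 2 ^ (b - 1) ≤ 2 ^ (d - 1) := Nat.pow_le_pow_right (by norm_num) (by omega)
    have h2 : 2 ^ (d - 1) < 2 ^ d := Nat.pow_lt_pow_right (by norm_num) (by omega)
    omega
  rw [pathG_coord h2b]
  obtain ⟨t, ht⟩ := G_prefix hbd
  obtain ⟨b', rfl⟩ : ∃ b', b = b' + 1 := ⟨b - 1, by omega⟩
  simp only [Nat.add_sub_cancel]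
  have h2b' : 2 ^ b' ≤ 2 ^ (b' + 1) - 1 := by
    have h1 : 1 ≤ 2 ^ b' := Nat.one_le_two_pow
    rw [pow_succ]; omega
  have hGb : G (b' + 1) = (G b' ++ [((b' : ℤ) + 1)]) ++ grayRev (G b') := by simp [G]
  have hlen : (G b' ++ [((b' : ℤ) + 1)]).length = 2 ^ b' := by
    simp [G_length]
    have : 1 ≤ 2 ^ b' := Nat.one_le_two_pow
    omega
  have htake : (G (b' + 1)).take (2 ^ b') = G b' ++ [((b' : ℤ) + 1)] := by
    rw [hGb]
    exact List.take_left' hlen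
  rw [ht, take_append_le _ _ (by rw [G_length]; exact h2b'), htake, sumAt_append,
    G_sumAt_high (by omega), sumAt_singleton]
  have hc : ((b' : ℤ) + 1).natAbs = b' + 1 := by
    rw [show ((b' : ℤ) + 1) = ((b' + 1 : ℕ) : ℤ) by push_cast; ring, Int.natAbs_natCast]
  rw [hc, if_pos rfl, Int.sign_eq_one_of_pos (by positivity)]
  ring

lemma pathG_high_d (hd : 1 ≤ d) {m : ℕ} (hm1 : 2 ^ (d - 1) ≤ m) (hm2 : m ≤ 2 ^ d - 1) :
    (pathVertices ptZero (G d)).getD m ptZero d = 1 := by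
  rw [pathG_coord hm2]
  obtain ⟨d', rfl⟩ : ∃ d', d = d' + 1 := ⟨d - 1, by omega⟩
  have hGb : G (d' + 1) = (G d' ++ [((d' : ℤ) + 1)]) ++ grayRev (G d') := by simp [G]
  have hlen : (G d' ++ [((d' : ℤ) + 1)]).length = 2 ^ d' := by
    simp [G_length]
    have : 1 ≤ 2 ^ d' := Nat.one_le_two_pow
    omega
  simp only [Nat.add_sub_cancel] at hm1
  have htake : (G (d' + 1)).take m
      = (G d' ++ [((d' : ℤ) + 1)]) ++ (grayRev (G d')).take (m - 2 ^ d') := by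
    rw [hGb, ← take_append_len, hlen]
    congr 1
    omega
  rw [htake, sumAt_append, sumAt_append, G_sumAt_high (by omega), sumAt_singleton]
  have hc : ((d' : ℤ) + 1).natAbs = d' + 1 := by
    rw [show ((d' : ℤ) + 1) = ((d' + 1 : ℕ) : ℤ) by push_cast; ring, Int.natAbs_natCast]
  rw [hc, if_pos rfl, Int.sign_eq_one_of_pos (by positivity)]
  have hz : sumAt (d' + 1) ((grayRev (G d')).take (m - 2 ^ d')) = 0 := by
    apply sumAt_eq_zero
    intro e he
    have he' : e ∈ grayRev (G d') := List.mem_of_mem_take he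
    have := (G_mem _ (grayRev_mem he')).2
    rw [Int.natAbs_neg] at this
    omega
  rw [hz]
  ring

lemma pathG_last_one (hd : 2 ≤ d) :
    (pathVertices ptZero (G d)).getD (2 ^ d - 1) ptZero 1 = 0 := by
  rw [pathG_coord le_rfl, List.take_of_length_le (by rw [G_length]), G_sumAt (by omega)]
  rw [if_neg (by omega)]

lemma pathG_penult_one (hd : 2 ≤ d) :
    (pathVertices ptZero (G d)).getD (2 ^ d - 2) ptZero 1 = 1 := by
  have h2 : 2 ≤ 2 ^ d := by
    calc 2 = 2 ^ 1 := rfl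
    _ ≤ 2 ^ d := Nat.pow_le_pow_right (by norm_num) (by omega)
  have hsplit : G d = (G d).take (2 ^ d - 2) ++ [(G d).getD (2 ^ d - 2) 0] := by
    have h := take_succ_getD (G d) (2 ^ d - 2) (by rw [G_length]; omega)
    rw [← h, show 2 ^ d - 2 + 1 = 2 ^ d - 1 by omega,
      List.take_of_length_le (by rw [G_length])]
  have hlast := pathG_last_one hd
  rw [pathG_coord le_rfl, List.take_of_length_le (by rw [G_length])] at hlast
  rw [pathG_coord (by omega)]
  rw [hsplit] at hlast
  rw [sumAt_append, sumAt_singleton, G_last hd] at hlast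
  simp at hlast
  omega


lemma flipped_cases (i : ℤ) : flipped i = 0 ∨ flipped i = 1 := by
  unfold flipped; split <;> simp

lemma chain'_getD_edge {c : List Pt} (h : c.Chain' (IsEdge d)) {t : ℕ}
    (ht : t + 1 < c.length) :
    ∃ e, IsDir d e ∧ c.getD (t + 1) ptZero = move (c.getD t ptZero) e := by
  have h2 := List.isChain_iff_getElem.mp h t (by omega)
  obtain ⟨e, he, hmv⟩ := h2
  refine ⟨e, he, ?_⟩
  simp [List.getD_eq_getElem?_getD, ht, Nat.lt_of_succ_lt ht, hmv]

lemma applySP_coord (τ : SignedPerm d) (x : Pt) {j : ℕ} (h1 : 1 ≤ j) (h2 : j ≤ d) :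
    applySP d 3 τ x j =
      if 0 ≤ τ.inv (j : ℤ) then x (τ.inv (j : ℤ)).natAbs
      else 3 - x (τ.inv (j : ℤ)).natAbs := by
  rw [applySP, if_pos ⟨h1, h2⟩]

lemma corner_coord (σ : SignedPerm d) (v : Pt) {j : ℕ} (h1 : 1 ≤ j) (h2 : j ≤ d) :
    (grayPiece d σ v).getD 0 ptZero j = 2 * v j + flipped (σ.inv (j : ℤ)) := by
  rw [grayPiece_getD_zero]
  simp [h1, h2]

lemma G_getD_mem {p : ℕ} (hp : p < (G d).length) : (G d).getD p 0 ∈ G d := by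
  rw [List.getD_eq_getElem _ _ hp]
  exact List.getElem_mem hp

lemma G_getD_isDir {p : ℕ} (hp : p < (G d).length) : IsDir d ((G d).getD p 0) := by
  have := G_mem _ (G_getD_mem hp)
  exact ⟨this.1, this.2⟩

lemma G_getD_small (hd : 2 ≤ d) {p : ℕ} (hp : p < 2 ^ (d - 2) - 1) :
    1 ≤ ((G d).getD p 0).natAbs ∧ ((G d).getD p 0).natAbs ≤ d - 2 := by
  obtain ⟨t, ht⟩ := G_prefix (show d - 2 ≤ d by omega)
  have hlen : (G (d - 2)).length = 2 ^ (d - 2) - 1 := G_length _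
  rw [ht, List.getD_append _ _ _ _ (by rw [hlen]; omega)]
  have hmem := G_mem _ (G_getD_mem (d := d - 2) (p := p) (by rw [hlen]; omega))
  exact ⟨by have := hmem.1; omega, hmem.2⟩

end Aux


set_option maxHeartbeats 2000000 in
/-- let `F'` be an extended hyperorthogonal well-folded curve
obtained by one step of inflation from `G'(d)` (entry direction `d`, curve
`G(d)` from the origin, exit direction `−(d−1)`), and let `R'` be one obtained
by one step of inflation from the reverse of `G'(d)` (entry direction `d−1`,
the reversed curve, exit direction `−d`).  Then there is no non-reverse
isometry `τ` (a hyperoctahedral symmetry of the 2-cube `{0,…,3}^d`, without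
reversal) such that `τ(R')` visits its vertices in the same order as `F'`. -/
theorem no_nonreverse_isometry (d : ℕ) (hd : 3 ≤ d)
    (σF σR : ℕ → SignedPerm d) (F R : List Pt)
    (hF : F = ((List.range (2 ^ d)).map
      (fun i => grayPiece d (σF i)
        ((pathVertices ptZero (G d)).getD i ptZero))).flatten)
    (hR : R = ((List.range (2 ^ d)).map
      (fun i => grayPiece d (σR i)
        (((pathVertices ptZero (G d)).reverse).getD i ptZero))).flatten)
    (hFv : IsKCurve d 2 F) (hRv : IsKCurve d 2 R)
    (hFho : HyperorthogonalE d (d : ℤ) F (-((d : ℤ) - 1)))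
    (hRho : HyperorthogonalE d ((d : ℤ) - 1) R (-(d : ℤ))) :
    ¬ ∃ τ : SignedPerm d, F = R.map (applySP d 3 τ) := by
  rintro ⟨τ, hτ⟩
  -- setup
  have hd1 : 1 ≤ d := by omega
  have h2d : 1 ≤ 2 ^ d := Nat.one_le_two_pow
  have hNd : 2 ^ (d - 2) < 2 ^ d := Nat.pow_lt_pow_right (by norm_num) (by omega)
  have hN3 : 2 ^ (d - 3) ≤ 2 ^ (d - 2) - 1 := by
    have h1 : 1 ≤ 2 ^ (d - 3) := Nat.one_le_two_pow
    have h2 : 2 ^ (d - 2) = 2 * 2 ^ (d - 3) := by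
      rw [← pow_succ']
      congr 1
      omega
    omega
  have hN1 : 1 ≤ 2 ^ (d - 2) := Nat.one_le_two_pow
  have hNd1 : 2 ^ (d - 2) ≤ 2 ^ (d - 1) := Nat.pow_le_pow_right (by norm_num) (by omega)
  have hd12 : 2 ^ (d - 1) < 2 ^ d := Nat.pow_lt_pow_right (by norm_num) (by omega)
  have hdd2 : 2 ^ d = 2 * 2 ^ (d - 1) := by
    rw [← pow_succ']
    congr 1
    omega
  set P := pathVertices ptZero (G d) with hP
  have hPlen : P.length = 2 ^ d := pathG_length
  have hPRlen : P.reverse.length = 2 ^ d := by rw [List.length_reverse, hPlen]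
  have hcF : ∀ i, i < 2 ^ d →
      (grayPiece d (σF i) (P.getD i ptZero)).length = 2 ^ d :=
    fun i _ => grayPiece_length _ _
  have hcR : ∀ i, i < 2 ^ d →
      (grayPiece d (σR i) (P.reverse.getD i ptZero)).length = 2 ^ d :=
    fun i _ => grayPiece_length _ _
  have hFlen : F.length = 2 ^ d * 2 ^ d := by
    rw [hF]; exact flat_length _ _ _ hcF
  have hRlen : R.length = 2 ^ d * 2 ^ d := by
    rw [hR]; exact flat_length _ _ _ hcR
  have hFget : ∀ q r : ℕ, q < 2 ^ d → r < 2 ^ d →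
      F.getD (q * 2 ^ d + r) ptZero =
        (grayPiece d (σF q) (P.getD q ptZero)).getD r ptZero := by
    intro q r hq hr
    rw [hF]; exact flat_getD _ _ hcF hq hr
  have hRget : ∀ q r : ℕ, q < 2 ^ d → r < 2 ^ d →
      R.getD (q * 2 ^ d + r) ptZero =
        (grayPiece d (σR q) (P.reverse.getD q ptZero)).getD r ptZero := by
    intro q r hq hr
    rw [hR]; exact flat_getD _ _ hcR hq hr
  have hmap : ∀ k, k < 2 ^ d * 2 ^ d →
      F.getD k ptZero = applySP d 3 τ (R.getD k ptZero) := by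
    intro k hk
    rw [hτ, List.getD_eq_getElem _ _ (by rw [List.length_map, hRlen]; omega),
      List.getElem_map, ← List.getD_eq_getElem _ _ (by rw [hRlen]; omega)]
  have hrev : ∀ i, i < 2 ^ d →
      P.reverse.getD i ptZero = P.getD (2 ^ d - 1 - i) ptZero := by
    intro i hi
    rw [List.getD_eq_getElem _ _ (by omega : i < P.reverse.length),
      List.getD_eq_getElem _ _ (by omega : 2 ^ d - 1 - i < P.length),
      List.getElem_reverse]
    congr 1
    omega
  -- Part I : τ.inv d = -d
  have hdd : IsDir d ((d : ℤ)) := isDir_coe hd1 le_rfl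
  have hfd : IsDir d (τ.f (d : ℤ)) := τ.maps _ hdd
  set b : ℕ := (τ.f (d : ℤ)).natAbs with hb
  have hb1 : 1 ≤ b := by have := Int.natAbs_pos.mpr hfd.1; omega
  have hbd : b ≤ d := hfd.2
  have hinvb : τ.inv ((b : ℕ) : ℤ) = -((d : ℕ) : ℤ) ∨ τ.inv ((b : ℕ) : ℤ) = ((d : ℕ) : ℤ) := by
    rcases Int.natAbs_eq (τ.f (d : ℤ)) with h | h
    · right
      rw [← hb] at h
      rw [show ((b : ℕ) : ℤ) = τ.f (d : ℤ) from h.symm, τ.left_inv _ hdd]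
    · left
      rw [← hb] at h
      have h2 : τ.inv (-((b : ℕ) : ℤ)) = (d : ℤ) := by
        rw [show -((b : ℕ) : ℤ) = τ.f (d : ℤ) by omega, τ.left_inv _ hdd]
      rw [τ.neg_inv] at h2
      omega
  -- head of F is in the origin subcube
  have hF0 : ∀ j, 1 ≤ j → j ≤ d →
      F.getD 0 ptZero j = flipped ((σF 0).inv (j : ℤ)) := by
    intro j hj1 hj2
    have h := hFget 0 0 (by omega) (by omega)
    simp only [Nat.zero_mul, Nat.add_zero, Nat.mul_zero] at h
    rw [h, corner_coord _ _ hj1 hj2, hP, pathG_zero]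
    simp [ptZero]
  -- head of R is in the subcube at 2·e_d
  have hR0d : R.getD 0 ptZero d = 2 + flipped ((σR 0).inv (d : ℤ)) := by
    have h := hRget 0 0 (by omega) (by omega)
    simp only [Nat.zero_mul, Nat.add_zero, Nat.mul_zero] at h
    rw [h, corner_coord _ _ hd1 le_rfl, hrev 0 (by omega)]
    rw [show 2 ^ d - 1 - 0 = 2 ^ d - 1 by omega]
    rw [hP, pathG_high_d hd1 (by omega) le_rfl]
    ring
  have hτinvb : τ.inv ((b : ℕ) : ℤ) = -((d : ℕ) : ℤ) := by
    rcases hinvb with h | h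
    · exact h
    · exfalso
      have hm := hmap 0 (by positivity)
      have hFb := hF0 b hb1 hbd
      have happ : applySP d 3 τ (R.getD 0 ptZero) b = R.getD 0 ptZero d := by
        rw [applySP_coord τ _ hb1 hbd, h, if_pos (by positivity)]
        congr 1
      rw [hm, happ, hR0d] at hFb
      rcases flipped_cases ((σF 0).inv (b : ℤ)) with h' | h' <;>
        rcases flipped_cases ((σR 0).inv (d : ℤ)) with h'' | h'' <;>
          rw [h', h''] at hFb <;> omega
  have hbig : ∀ i, i ≤ 2 ^ (d - 2) → 1 ≤ i → 2 ^ (d - 1) ≤ 2 ^ d - 1 - i := by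
    intro i h1 h2
    have h3 : 2 ^ (d - 2) < 2 ^ (d - 1) := Nat.pow_lt_pow_right (by norm_num) (by omega)
    omega
  have hbeqd : b = d := by
    by_contra hbne
    have hblt : b ≤ d - 1 := by omega
    set i : ℕ := 2 ^ (b - 1) with hi
    have hib : i ≤ 2 ^ (d - 2) := by
      rw [hi]
      calc 2 ^ (b - 1) ≤ 2 ^ (d - 2) := Nat.pow_le_pow_right (by norm_num) (by omega)
      _ ≤ 2 ^ (d - 2) := le_rfl
    have hi1 : 1 ≤ i := Nat.one_le_two_pow
    have hiltd : i < 2 ^ d := by omega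
    -- F piece i head, coordinate b
    have hFhead : F.getD (i * 2 ^ d) ptZero b
        = 2 + flipped ((σF i).inv (b : ℤ)) := by
      have h := hFget i 0 hiltd (by omega)
      rw [Nat.add_zero] at h
      rw [h, corner_coord _ _ hb1 hbd, hP, pathG_pow hb1 hbd]
      ring
    -- R piece i head, coordinate d
    have hRhead : R.getD (i * 2 ^ d) ptZero d
        = 2 + flipped ((σR i).inv (d : ℤ)) := by
      have h := hRget i 0 hiltd (by omega)
      rw [Nat.add_zero] at h
      rw [h, corner_coord _ _ hd1 le_rfl, hrev i hiltd, hP,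
        pathG_high_d hd1 (hbig i hib hi1) (by omega)]
      ring
    have hm := hmap (i * 2 ^ d) (Nat.mul_lt_mul_of_pos_right hiltd (by omega))
    have happ : applySP d 3 τ (R.getD (i * 2 ^ d) ptZero) b
        = 3 - R.getD (i * 2 ^ d) ptZero d := by
      rw [applySP_coord τ _ hb1 hbd, hτinvb, if_neg (by omega)]
      congr 2
      simp
    have := congrFun hm b
    rw [happ, hFhead, hRhead] at this
    rcases flipped_cases ((σF i).inv (b : ℤ)) with h' | h' <;>
      rcases flipped_cases ((σR i).inv (d : ℤ)) with h'' | h'' <;>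
        rw [h', h''] at this <;> omega
  have hτinvd : τ.inv ((d : ℕ) : ℤ) = -((d : ℕ) : ℤ) := by
    have h := hτinvb
    rw [hbeqd] at h
    exact h
  -- Part II : windows of hyperorthogonality
  have hlen2 : 2 ^ d < 2 ^ d * 2 ^ d := by
    have : 2 ≤ 2 ^ d := by
      calc 2 = 2 ^ 1 := rfl
      _ ≤ 2 ^ d := Nat.pow_le_pow_right (by norm_num) (by omega)
    nlinarith
  -- internal edges within piece 0 of F
  have haxF : ∀ t, 1 ≤ t → t ≤ 2 ^ d - 1 →
      axE d (d : ℤ) F (-((d : ℤ) - 1)) t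
        = ((σF 0).f ((G d).getD (t - 1) 0)).natAbs := by
    intro t h1 h2
    have hgd : IsDir d ((G d).getD (t - 1) 0) := G_getD_isDir (by rw [G_length]; omega)
    have hFt : F.getD t ptZero
        = move (F.getD (t - 1) ptZero) ((σF 0).f ((G d).getD (t - 1) 0)) := by
      have e1 := hFget 0 t (by omega) (by omega)
      have e2 := hFget 0 (t - 1) (by omega) (by omega)
      simp only [Nat.zero_mul, Nat.zero_add] at e1 e2
      rw [e1, e2, grayPiece_getD_succ _ _ h1 h2]
    rw [axE, if_neg (by omega), if_neg (by rw [hFlen]; omega), hFt]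
    exact axisOf_move ((σF 0).maps _ hgd)
  have haxR : ∀ t, 1 ≤ t → t ≤ 2 ^ d - 1 →
      axE d ((d : ℤ) - 1) R (-(d : ℤ)) t
        = ((σR 0).f ((G d).getD (t - 1) 0)).natAbs := by
    intro t h1 h2
    have hgd : IsDir d ((G d).getD (t - 1) 0) := G_getD_isDir (by rw [G_length]; omega)
    have hRt : R.getD t ptZero
        = move (R.getD (t - 1) ptZero) ((σR 0).f ((G d).getD (t - 1) 0)) := by
      have e1 := hRget 0 t (by omega) (by omega)
      have e2 := hRget 0 (t - 1) (by omega) (by omega)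
      simp only [Nat.zero_mul, Nat.zero_add] at e1 e2
      rw [e1, e2, grayPiece_getD_succ _ _ h1 h2]
    rw [axE, if_neg (by omega), if_neg (by rw [hRlen]; omega), hRt]
    exact axisOf_move ((σR 0).maps _ hgd)
  -- the first connecting edge of F has axis 1
  have haxFconn : axE d (d : ℤ) F (-((d : ℤ) - 1)) (2 ^ d) = 1 := by
    obtain ⟨e, he, hmv⟩ := chain'_getD_edge hFv.1.2 (t := 2 ^ d - 1)
      (by rw [hFlen]; omega)
    rw [show 2 ^ d - 1 + 1 = 2 ^ d by omega] at hmv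
    have hvleft : F.getD (2 ^ d - 1) ptZero 1 = 0 ∨ F.getD (2 ^ d - 1) ptZero 1 = 1 := by
      have e2 := hFget 0 (2 ^ d - 1) (by omega) (by omega)
      simp only [Nat.zero_mul, Nat.zero_add] at e2
      rw [e2, hP, pathG_zero]
      have hcube := grayPiece_last_in_cube (σF 0) ptZero (j := 1) le_rfl (by omega)
      simpa [ptZero] using hcube
    have hvright : F.getD (2 ^ d) ptZero 1 = 2 + flipped ((σF 1).inv 1) := by
      have e3 := hFget 1 0 (by omega) (by omega)
      rw [Nat.one_mul, Nat.add_zero] at e3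
      rw [e3, corner_coord _ _ le_rfl (by omega)]
      have hp1 : P.getD 1 ptZero 1 = 1 := by
        have := pathG_pow (d := d) (b := 1) le_rfl (by omega)
        rw [← hP] at this
        simpa using this
      rw [hp1]
      norm_num
    have hne : move (F.getD (2 ^ d - 1) ptZero) e 1 ≠ F.getD (2 ^ d - 1) ptZero 1 := by
      rw [← hmv, hvright]
      rcases hvleft with h' | h' <;> rw [h'] <;>
        rcases flipped_cases ((σF 1).inv 1) with h'' | h'' <;> rw [h''] <;> omega
    have hax1 : (1 : ℕ) = e.natAbs := (move_diff_iff he.1 1).mp hne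
    rw [axE, if_neg (by omega), if_neg (by rw [hFlen]; omega), hmv,
      axisOf_move he, ← hax1]
  -- the first connecting edge of R has axis 1
  have haxRconn : axE d ((d : ℤ) - 1) R (-(d : ℤ)) (2 ^ d) = 1 := by
    obtain ⟨e, he, hmv⟩ := chain'_getD_edge hRv.1.2 (t := 2 ^ d - 1)
      (by rw [hRlen]; omega)
    rw [show 2 ^ d - 1 + 1 = 2 ^ d by omega] at hmv
    have hvleft : R.getD (2 ^ d - 1) ptZero 1 = 0 ∨ R.getD (2 ^ d - 1) ptZero 1 = 1 := by
      have e2 := hRget 0 (2 ^ d - 1) (by omega) (by omega)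
      simp only [Nat.zero_mul, Nat.zero_add] at e2
      rw [e2, hrev 0 (by omega), show 2 ^ d - 1 - 0 = 2 ^ d - 1 by omega, hP]
      have hcube := grayPiece_last_in_cube (σR 0)
        ((pathVertices ptZero (G d)).getD (2 ^ d - 1) ptZero) (j := 1) le_rfl (by omega)
      rw [pathG_last_one (by omega)] at hcube
      simpa using hcube
    have hvright : R.getD (2 ^ d) ptZero 1 = 2 + flipped ((σR 1).inv 1) := by
      have e3 := hRget 1 0 (by omega) (by omega)
      rw [Nat.one_mul, Nat.add_zero] at e3
      rw [e3, corner_coord _ _ le_rfl (by omega), hrev 1 (by omega),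
        show 2 ^ d - 1 - 1 = 2 ^ d - 2 by omega, hP, pathG_penult_one (by omega)]
      norm_num
    have hne : move (R.getD (2 ^ d - 1) ptZero) e 1 ≠ R.getD (2 ^ d - 1) ptZero 1 := by
      rw [← hmv, hvright]
      rcases hvleft with h' | h' <;> rw [h'] <;>
        rcases flipped_cases ((σR 1).inv 1) with h'' | h'' <;> rw [h''] <;> omega
    have hax1 : (1 : ℕ) = e.natAbs := (move_diff_iff he.1 1).mp hne
    rw [axE, if_neg (by omega), if_neg (by rw [hRlen]; omega), hmv,
      axisOf_move he, ← hax1]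
  -- the Finsets of axes of the first (2^(d-2) - 1) internal edges
  set PFs : Finset ℕ :=
    (Finset.Icc 1 (d - 2)).image (fun a => ((σF 0).f ((a : ℕ) : ℤ)).natAbs) with hPFs
  set PRs : Finset ℕ :=
    (Finset.Icc 1 (d - 2)).image (fun a => ((σR 0).f ((a : ℕ) : ℤ)).natAbs) with hPRs
  have haxF0 : axE d (d : ℤ) F (-((d : ℤ) - 1)) 0 = d := by
    rw [axE, if_pos rfl]; simp
  have haxR0 : axE d ((d : ℤ) - 1) R (-(d : ℤ)) 0 = d - 1 := by
    rw [axE, if_pos rfl]; omega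
  have hsmallbound : ∀ a, 1 ≤ a → a ≤ d - 2 → 2 ^ (a - 1) ≤ 2 ^ (d - 2) - 1 := by
    intro a h1 h2
    calc 2 ^ (a - 1) ≤ 2 ^ (d - 3) := Nat.pow_le_pow_right (by norm_num) (by omega)
    _ ≤ 2 ^ (d - 2) - 1 := hN3
  -- window at the entry of F
  have hwF0 : (Finset.range (2 ^ (d - 2))).image
      (fun t => axE d (d : ℤ) F (-((d : ℤ) - 1)) (0 + t)) = insert d PFs := by
    apply Finset.ext
    intro x
    simp only [Finset.mem_image, Finset.mem_range, Finset.mem_insert, hPFs,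
      Finset.mem_Icc]
    constructor
    · rintro ⟨t, ht, rfl⟩
      rcases Nat.eq_zero_or_pos t with rfl | htpos
      · left; rw [Nat.add_zero, haxF0]
      · right
        rw [Nat.zero_add, haxF t htpos (by omega)]
        have hsm := G_getD_small (by omega : 2 ≤ d) (p := t - 1) (by omega)
        exact ⟨((G d).getD (t - 1) 0).natAbs, ⟨hsm.1, hsm.2⟩,
          sp_natAbs_f_natAbs (σF 0) (G_getD_isDir (by rw [G_length]; omega))⟩
    · rintro (rfl | ⟨a, ⟨ha1, ha2⟩, rfl⟩)
      · exact ⟨0, by omega, by rw [Nat.add_zero, haxF0]⟩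
      · refine ⟨2 ^ (a - 1), by have := hsmallbound a ha1 ha2; omega, ?_⟩
        rw [Nat.zero_add, haxF _ Nat.one_le_two_pow
          (by have := hsmallbound a ha1 ha2; omega), G_getD_pow ha1 (by omega)]
  -- window at the entry of R
  have hwR0 : (Finset.range (2 ^ (d - 2))).image
      (fun t => axE d ((d : ℤ) - 1) R (-(d : ℤ)) (0 + t)) = insert (d - 1) PRs := by
    apply Finset.ext
    intro x
    simp only [Finset.mem_image, Finset.mem_range, Finset.mem_insert, hPRs,
      Finset.mem_Icc]
    constructor
    · rintro ⟨t, ht, rfl⟩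
      rcases Nat.eq_zero_or_pos t with rfl | htpos
      · left; rw [Nat.add_zero, haxR0]
      · right
        rw [Nat.zero_add, haxR t htpos (by omega)]
        have hsm := G_getD_small (by omega : 2 ≤ d) (p := t - 1) (by omega)
        exact ⟨((G d).getD (t - 1) 0).natAbs, ⟨hsm.1, hsm.2⟩,
          sp_natAbs_f_natAbs (σR 0) (G_getD_isDir (by rw [G_length]; omega))⟩
    · rintro (rfl | ⟨a, ⟨ha1, ha2⟩, rfl⟩)
      · exact ⟨0, by omega, by rw [Nat.add_zero, haxR0]⟩
      · refine ⟨2 ^ (a - 1), by have := hsmallbound a ha1 ha2; omega, ?_⟩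
        rw [Nat.zero_add, haxR _ Nat.one_le_two_pow
          (by have := hsmallbound a ha1 ha2; omega), G_getD_pow ha1 (by omega)]
  -- mirrored-index helper
  have hc12 : 2 ^ (d - 2) < 2 ^ (d - 1) := Nat.pow_lt_pow_right (by norm_num) (by omega)
  have hmirrval : ∀ u, 2 ^ d - 2 ^ (d - 2) + 1 ≤ u → u ≤ 2 ^ d - 1 →
      ∃ p, p < 2 ^ (d - 2) - 1 ∧
        ((G d).getD (u - 1) 0).natAbs = ((G d).getD p 0).natAbs := by
    intro u hu1 hu2
    refine ⟨2 ^ d - 1 - u, by omega, ?_⟩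
    have hm := G_mirror (d := d) hd1 (p := 2 ^ d - 1 - u) (by omega)
    rw [show 2 ^ d - 2 - (2 ^ d - 1 - u) = u - 1 by omega] at hm
    rw [hm, Int.natAbs_neg]
  -- window at the first connecting edge of F
  have hwF1 : (Finset.range (2 ^ (d - 2))).image
      (fun t => axE d (d : ℤ) F (-((d : ℤ) - 1)) (2 ^ d - 2 ^ (d - 2) + 1 + t))
        = insert 1 PFs := by
    apply Finset.ext
    intro x
    simp only [Finset.mem_image, Finset.mem_range, Finset.mem_insert, hPFs,
      Finset.mem_Icc]
    constructor
    · rintro ⟨t, ht, rfl⟩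
      by_cases hconn : t = 2 ^ (d - 2) - 1
      · left
        rw [hconn, show 2 ^ d - 2 ^ (d - 2) + 1 + (2 ^ (d - 2) - 1) = 2 ^ d by omega,
          haxFconn]
      · right
        set u : ℕ := 2 ^ d - 2 ^ (d - 2) + 1 + t with hu
        obtain ⟨p, hp, hpv⟩ := hmirrval u (by omega) (by omega)
        have hsm := G_getD_small (by omega : 2 ≤ d) hp
        rw [haxF u (by omega) (by omega)]
        refine ⟨((G d).getD (u - 1) 0).natAbs, ⟨by omega, by omega⟩,
          sp_natAbs_f_natAbs (σF 0) (G_getD_isDir (by rw [G_length]; omega))⟩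
    · rintro (rfl | ⟨a, ⟨ha1, ha2⟩, rfl⟩)
      · exact ⟨2 ^ (d - 2) - 1,
          by omega,
          by rw [show 2 ^ d - 2 ^ (d - 2) + 1 + (2 ^ (d - 2) - 1) = 2 ^ d by omega,
            haxFconn]⟩
      · have hpa := hsmallbound a ha1 ha2
        have hA1 : (1 : ℕ) ≤ 2 ^ (a - 1) := Nat.one_le_two_pow
        refine ⟨2 ^ (d - 2) - 1 - 2 ^ (a - 1), by omega, ?_⟩
        rw [show 2 ^ d - 2 ^ (d - 2) + 1 + (2 ^ (d - 2) - 1 - 2 ^ (a - 1))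
          = 2 ^ d - 2 ^ (a - 1) by omega]
        rw [haxF (2 ^ d - 2 ^ (a - 1)) (by omega) (by omega)]
        have hm := G_mirror (d := d) hd1 (p := 2 ^ (a - 1) - 1) (by omega)
        rw [G_getD_pow ha1 (by omega)] at hm
        rw [show 2 ^ d - 2 ^ (a - 1) - 1 = 2 ^ d - 2 - (2 ^ (a - 1) - 1) by omega,
          hm, (σF 0).neg, Int.natAbs_neg]
  -- window at the first connecting edge of R
  have hwR1 : (Finset.range (2 ^ (d - 2))).image
      (fun t => axE d ((d : ℤ) - 1) R (-(d : ℤ)) (2 ^ d - 2 ^ (d - 2) + 1 + t))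
        = insert 1 PRs := by
    apply Finset.ext
    intro x
    simp only [Finset.mem_image, Finset.mem_range, Finset.mem_insert, hPRs,
      Finset.mem_Icc]
    constructor
    · rintro ⟨t, ht, rfl⟩
      by_cases hconn : t = 2 ^ (d - 2) - 1
      · left
        rw [hconn, show 2 ^ d - 2 ^ (d - 2) + 1 + (2 ^ (d - 2) - 1) = 2 ^ d by omega,
          haxRconn]
      · right
        set u : ℕ := 2 ^ d - 2 ^ (d - 2) + 1 + t with hu
        obtain ⟨p, hp, hpv⟩ := hmirrval u (by omega) (by omega)
        have hsm := G_getD_small (by omega : 2 ≤ d) hp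
        rw [haxR u (by omega) (by omega)]
        refine ⟨((G d).getD (u - 1) 0).natAbs, ⟨by omega, by omega⟩,
          sp_natAbs_f_natAbs (σR 0) (G_getD_isDir (by rw [G_length]; omega))⟩
    · rintro (rfl | ⟨a, ⟨ha1, ha2⟩, rfl⟩)
      · exact ⟨2 ^ (d - 2) - 1,
          by omega,
          by rw [show 2 ^ d - 2 ^ (d - 2) + 1 + (2 ^ (d - 2) - 1) = 2 ^ d by omega,
            haxRconn]⟩
      · have hpa := hsmallbound a ha1 ha2
        have hA1 : (1 : ℕ) ≤ 2 ^ (a - 1) := Nat.one_le_two_pow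
        refine ⟨2 ^ (d - 2) - 1 - 2 ^ (a - 1), by omega, ?_⟩
        rw [show 2 ^ d - 2 ^ (d - 2) + 1 + (2 ^ (d - 2) - 1 - 2 ^ (a - 1))
          = 2 ^ d - 2 ^ (a - 1) by omega]
        rw [haxR (2 ^ d - 2 ^ (a - 1)) (by omega) (by omega)]
        have hm := G_mirror (d := d) hd1 (p := 2 ^ (a - 1) - 1) (by omega)
        rw [G_getD_pow ha1 (by omega)] at hm
        rw [show 2 ^ d - 2 ^ (a - 1) - 1 = 2 ^ d - 2 - (2 ^ (a - 1) - 1) by omega,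
          hm, (σR 0).neg, Int.natAbs_neg]
  -- apply hyperorthogonality to the four windows
  have hwin : 0 + 2 ^ (d - 2) ≤ 2 ^ d * 2 ^ d + 1 := by omega
  have hwin' : 2 ^ d - 2 ^ (d - 2) + 1 + 2 ^ (d - 2) ≤ 2 ^ d * 2 ^ d + 1 := by omega
  have hcF0 : (insert d PFs).card = d - 1 := by
    have h := hFho (d - 2) le_rfl 0 (by rw [hFlen]; exact hwin)
    rw [hwF0] at h
    omega
  have hcR0 : (insert (d - 1) PRs).card = d - 1 := by
    have h := hRho (d - 2) le_rfl 0 (by rw [hRlen]; exact hwin)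
    rw [hwR0] at h
    omega
  have hcF1 : (insert 1 PFs).card = d - 1 := by
    have h := hFho (d - 2) le_rfl (2 ^ d - 2 ^ (d - 2) + 1) (by rw [hFlen]; exact hwin')
    rw [hwF1] at h
    omega
  have hcR1 : (insert 1 PRs).card = d - 1 := by
    have h := hRho (d - 2) le_rfl (2 ^ d - 2 ^ (d - 2) + 1) (by rw [hRlen]; exact hwin')
    rw [hwR1] at h
    omega
  -- cardinality bookkeeping
  have hPFcard : PFs.card ≤ d - 2 := by
    calc PFs.card ≤ (Finset.Icc 1 (d - 2)).card := Finset.card_image_le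
    _ = d - 2 := by rw [Nat.card_Icc]; omega
  have hPRcard : PRs.card ≤ d - 2 := by
    calc PRs.card ≤ (Finset.Icc 1 (d - 2)).card := Finset.card_image_le
    _ = d - 2 := by rw [Nat.card_Icc]; omega
  have hdPF : d ∉ PFs := by
    intro hmem
    rw [Finset.insert_eq_self.mpr hmem] at hcF0
    omega
  have h1PR : 1 ∉ PRs := by
    intro hmem
    rw [Finset.insert_eq_self.mpr hmem] at hcR1
    omega
  have hd1PR : d - 1 ∉ PRs := by
    intro hmem
    rw [Finset.insert_eq_self.mpr hmem] at hcR0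
    omega
  have hPRcard' : PRs.card = d - 2 := by
    rw [Finset.card_insert_of_notMem h1PR] at hcR1
    omega
  have hPRsub : PRs ⊆ Finset.Icc 1 d := by
    intro x hx
    rw [hPRs, Finset.mem_image] at hx
    obtain ⟨a, ha, rfl⟩ := hx
    rw [Finset.mem_Icc] at ha
    have hdir : IsDir d ((σR 0).f ((a : ℕ) : ℤ)) :=
      (σR 0).maps _ (isDir_coe ha.1 (by omega))
    rw [Finset.mem_Icc]
    exact ⟨by have := Int.natAbs_pos.mpr hdir.1; omega, hdir.2⟩
  -- d must belong to PRs
  have hdPR : d ∈ PRs := by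
    by_contra hdn
    have hsub : PRs ⊆ (((Finset.Icc 1 d).erase 1).erase (d - 1)).erase d := by
      intro x hx
      rw [Finset.mem_erase, Finset.mem_erase, Finset.mem_erase]
      refine ⟨fun h => hdn (h ▸ hx), fun h => hd1PR (h ▸ hx), fun h => h1PR (h ▸ hx),
        hPRsub hx⟩
    have hcard := Finset.card_le_card hsub
    rw [Finset.card_erase_of_mem, Finset.card_erase_of_mem,
      Finset.card_erase_of_mem, Nat.card_Icc] at hcard
    · omega
    · rw [Finset.mem_Icc]; omega
    · rw [Finset.mem_erase, Finset.mem_Icc]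
      exact ⟨by omega, by omega, by omega⟩
    · rw [Finset.mem_erase, Finset.mem_erase, Finset.mem_Icc]
      exact ⟨by omega, by omega, by omega, by omega⟩
  -- the final contradiction
  rw [hPRs, Finset.mem_image] at hdPR
  obtain ⟨a, ha, haval⟩ := hdPR
  rw [Finset.mem_Icc] at ha
  have hA1 : (1 : ℕ) ≤ 2 ^ (a - 1) := Nat.one_le_two_pow
  have htb := hsmallbound a ha.1 ha.2
  have hgd : (G d).getD (2 ^ (a - 1) - 1) 0 = ((a : ℕ) : ℤ) :=
    G_getD_pow ha.1 (by omega)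
  have hdirR : IsDir d ((σR 0).f ((a : ℕ) : ℤ)) :=
    (σR 0).maps _ (isDir_coe ha.1 (by omega))
  have hdirF : IsDir d ((σF 0).f ((a : ℕ) : ℤ)) :=
    (σF 0).maps _ (isDir_coe ha.1 (by omega))
  have hRt : R.getD (2 ^ (a - 1)) ptZero
      = move (R.getD (2 ^ (a - 1) - 1) ptZero) ((σR 0).f ((a : ℕ) : ℤ)) := by
    have e1 := hRget 0 (2 ^ (a - 1)) (by omega) (by omega)
    have e2 := hRget 0 (2 ^ (a - 1) - 1) (by omega) (by omega)
    simp only [Nat.zero_mul, Nat.zero_add] at e1 e2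
    rw [e1, e2, grayPiece_getD_succ _ _ hA1 (by omega), hgd]
  have hFt : F.getD (2 ^ (a - 1)) ptZero
      = move (F.getD (2 ^ (a - 1) - 1) ptZero) ((σF 0).f ((a : ℕ) : ℤ)) := by
    have e1 := hFget 0 (2 ^ (a - 1)) (by omega) (by omega)
    have e2 := hFget 0 (2 ^ (a - 1) - 1) (by omega) (by omega)
    simp only [Nat.zero_mul, Nat.zero_add] at e1 e2
    rw [e1, e2, grayPiece_getD_succ _ _ hA1 (by omega), hgd]
  have hRdiff : R.getD (2 ^ (a - 1)) ptZero d ≠ R.getD (2 ^ (a - 1) - 1) ptZero d := by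
    rw [hRt]
    exact (move_diff_iff hdirR.1 d).mpr haval.symm
  have hFdiff : F.getD (2 ^ (a - 1)) ptZero d ≠ F.getD (2 ^ (a - 1) - 1) ptZero d := by
    have hm1 := hmap (2 ^ (a - 1)) (by omega)
    have hm2 := hmap (2 ^ (a - 1) - 1) (by omega)
    rw [hm1, hm2, applySP_coord τ _ hd1 le_rfl, applySP_coord τ _ hd1 le_rfl, hτinvd,
      if_neg (by omega), if_neg (by omega)]
    rw [show ((-((d : ℕ) : ℤ)).natAbs) = d by omega]
    intro hcon
    apply hRdiff
    omega
  apply hdPF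
  rw [hFt] at hFdiff
  have := (move_diff_iff hdirF.1 d).mp hFdiff
  rw [hPFs, Finset.mem_image]
  exact ⟨a, by rw [Finset.mem_Icc]; omega, this.symm⟩
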